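/- Lipschitz parameterization of Exp4: Assume there exists ρ > 0 such that for all t ≥ 1 and all i ∈ [K], Σ_{j ∈ E} ξ_{j,t}(i) ≥ ρ. Let F ≥ |E|, ε ∈ (0, ρ/F), R > 0, T_ε = min( ⌊ (1/F − ε/ρ) · √n / R ⌋, n ), and L_ε = (1/(R ε²)) · exp(1/ε²). Then for all parameters θ, δ ∈ [0, R] (with r ≤ θ, δ ≤ R for any 0 ≤ r ≤ R) and all t ≤ T_ε, sup_{k ∈ [K]} | log( π_t^θ(k) / π_t^δ(k) ) | ≤ L_ε |θ − δ|, where both sequences are computed from the same expert advice, rewards and actions. -/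

import Mathlib

/-- Softmax distribution associated with a score vector. -/
noncomputable def softmax {ι : Type*} [Fintype ι] (h : ι → ℝ) (a : ι) : ℝ :=
  Real.exp (h a) / ∑ b, Real.exp (h b)

/-- Cumulative estimated expert rewards `Y t j = Σ_{s=1}^t ŷ_{j,s}` of the `Exp4`
algorithm with learning rate `θ/√n`, where
`ŷ_{j,s} = ξ_{j,s}(A_s) g_{A_s,s} / π_s(A_s)` and
`π_s(a) = Σ_i q_s(i) ξ_{i,s}(a)`. -/
noncomputable def exp4Y (n K : ℕ) {E : Type*} [Fintype E]
    (ξ : E → ℕ → Fin K → ℝ) (g : Fin K → ℕ → ℝ) (A : ℕ → Fin K) (θ : ℝ) :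
    ℕ → E → ℝ
  | 0 => fun _ => 0
  | (t + 1) => fun j =>
      exp4Y n K ξ g A θ t j +
        ξ j (t + 1) (A (t + 1)) * g (A (t + 1)) (t + 1) /
          (∑ i, softmax (fun i' => -(θ / Real.sqrt n) * exp4Y n K ξ g A θ t i') i *
            ξ i (t + 1) (A (t + 1)))

/-- The `Exp4` expert weights: `q_1` is uniform over experts and
`q_{t+1} = softmax(−(θ/√n) Σ_{s≤t} ŷ_{·,s})`. -/
noncomputable def exp4q (n K : ℕ) {E : Type*} [Fintype E]
    (ξ : E → ℕ → Fin K → ℝ) (g : Fin K → ℕ → ℝ) (A : ℕ → Fin K) (θ : ℝ)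
    (t : ℕ) : E → ℝ :=
  softmax (fun i => -(θ / Real.sqrt n) * exp4Y n K ξ g A θ (t - 1) i)

/-- The `Exp4` mixture action probabilities `π_t(a) = Σ_j q_t(j) ξ_{j,t}(a)`. -/
noncomputable def exp4Pi (n K : ℕ) {E : Type*} [Fintype E]
    (ξ : E → ℕ → Fin K → ℝ) (g : Fin K → ℕ → ℝ) (A : ℕ → Fin K) (θ : ℝ)
    (t : ℕ) (a : Fin K) : ℝ :=
  ∑ j, exp4q n K ξ g A θ t j * ξ j t a

section Aux
variable {ι : Type*} [Fintype ι] [Nonempty ι]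

lemma sum_exp_pos (h : ι → ℝ) : 0 < ∑ b, Real.exp (h b) :=
  Finset.sum_pos (fun b _ => Real.exp_pos _) Finset.univ_nonempty

lemma softmax_pos (h : ι → ℝ) (a : ι) : 0 < softmax h a :=
  div_pos (Real.exp_pos _) (sum_exp_pos h)

lemma softmax_sum_one (h : ι → ℝ) : ∑ a, softmax h a = 1 := by
  simp only [softmax]
  rw [← Finset.sum_div]
  exact div_self (ne_of_gt (sum_exp_pos h))

lemma softmax_comp (u v : ι → ℝ) (c : ℝ) (hc : ∀ i, |u i - v i| ≤ c) (a : ι) :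
    softmax u a ≤ Real.exp (2 * c) * softmax v a := by
  have hnum : Real.exp (u a) ≤ Real.exp c * Real.exp (v a) := by
    rw [← Real.exp_add]
    exact Real.exp_le_exp.2 (by have := (abs_le.1 (hc a)).2; linarith)
  have hden : Real.exp (-c) * (∑ b, Real.exp (v b)) ≤ ∑ b, Real.exp (u b) := by
    rw [Finset.mul_sum]
    refine Finset.sum_le_sum fun i _ => ?_
    rw [← Real.exp_add]
    exact Real.exp_le_exp.2 (by have := (abs_le.1 (hc i)).1; linarith)
  have h1 : softmax u a ≤ (Real.exp c * Real.exp (v a)) / (Real.exp (-c) * ∑ b, Real.exp (v b)) := by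
    apply div_le_div₀ (by positivity) hnum (by positivity) hden
  calc softmax u a ≤ (Real.exp c * Real.exp (v a)) / (Real.exp (-c) * ∑ b, Real.exp (v b)) := h1
    _ = Real.exp (2 * c) * softmax v a := by
        rw [softmax, Real.exp_neg, two_mul, Real.exp_add]
        field_simp

end Aux

lemma exp_35_le : Real.exp (3/5) ≤ 1.83 := by
  have h5 : Real.exp (3/5) ^ 5 = Real.exp 3 := by
    rw [← Real.exp_nat_mul]; norm_num
  have h3 : Real.exp 3 ≤ 1.83 ^ 5 := by
    have h1 : Real.exp 1 ≤ 2.7182818286 := (Real.exp_one_lt_d9).le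
    have h2 : Real.exp 3 = Real.exp 1 ^ 3 := by rw [← Real.exp_nat_mul]; norm_num
    rw [h2]
    calc Real.exp 1 ^ 3 ≤ 2.7182818286 ^ 3 := by
          exact pow_le_pow_left₀ (Real.exp_pos 1).le h1 3
      _ ≤ 1.83 ^ 5 := by norm_num
  have := h5 ▸ h3
  exact le_of_pow_le_pow_left₀ (by norm_num) (by norm_num) this

lemma one_le_exp_35 : (1:ℝ) ≤ Real.exp (3/5) := by
  rw [show (1:ℝ) = Real.exp 0 by simp]
  exact Real.exp_le_exp.2 (by norm_num)

lemma num_quartic (x : ℝ) (hx : 0 ≤ x) : 10 * x^2 ≤ 3 * (1+x)^2 * (x^2 - 1.66*x + 2) := by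
  nlinarith [sq_nonneg (x - 1), sq_nonneg (x^2 - 1), sq_nonneg x, sq_nonneg (x^2 + x - 2),
    sq_nonneg (x^2 - x), mul_nonneg hx (sq_nonneg (x-1))]

lemma num_ineq (ε : ℝ) (h0 : 0 < ε) (h1 : ε < 1) :
    ε * (1-ε) * (-Real.log ε) * Real.exp (2 * Real.exp (3/5) * (1-ε)/ε - 1/ε^2) ≤ 3/10 := by
  set x : ℝ := (1-ε)/ε with hxdef
  have hx0 : 0 < x := div_pos (by linarith) h0
  have hεx : 1/ε = 1 + x := by rw [hxdef]; field_simp; ring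
  have hlog : -Real.log ε ≤ x := by
    have := Real.log_le_sub_one_of_pos (x := 1/ε) (by positivity)
    rw [Real.log_div one_ne_zero (ne_of_gt h0), Real.log_one] at this
    linarith [this, hεx]
  have hexp35 : Real.exp (3/5) ≤ 1.83 := exp_35_le
  have hexparg : 2 * Real.exp (3/5) * (1-ε)/ε - 1/ε^2 ≤ 1.66*x - x^2 - 1 := by
    have h2 : 2 * Real.exp (3/5) * (1-ε)/ε ≤ 3.66 * x := by
      have h3 : (0:ℝ) ≤ (1-ε)/ε := hx0.le
      calc 2 * Real.exp (3/5) * (1-ε)/ε = (2 * Real.exp (3/5)) * ((1-ε)/ε) := by ring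
        _ ≤ 3.66 * x := by rw [← hxdef]; nlinarith
    have h4 : 1/ε^2 = (1+x)^2 := by rw [← hεx]; rw [div_pow, one_pow]
    nlinarith [h2, h4]
  have hden : (0:ℝ) < x^2 - 1.66*x + 2 := by nlinarith [sq_nonneg (x - 0.83)]
  have hexpb : Real.exp (1.66*x - x^2 - 1) ≤ 1/(x^2 - 1.66*x + 2) := by
    rw [le_div_iff₀ hden]
    have := Real.add_one_le_exp (-(1.66*x - x^2 - 1))
    have h5 : (x^2 - 1.66*x + 2) ≤ Real.exp (-(1.66*x - x^2 - 1)) := by linarith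
    calc Real.exp (1.66*x - x^2 - 1) * (x^2 - 1.66*x + 2)
        ≤ Real.exp (1.66*x - x^2 - 1) * Real.exp (-(1.66*x - x^2 - 1)) :=
          mul_le_mul_of_nonneg_left h5 (Real.exp_pos _).le
      _ = 1 := by rw [← Real.exp_add]; simp
  have hεeq : 1 - ε = ε * x := by rw [hxdef]; field_simp
  have hloge0 : 0 ≤ -Real.log ε := by
    have := Real.log_nonpos h0.le h1.le; linarith
  have hexpmono : Real.exp (2 * Real.exp (3/5) * (1-ε)/ε - 1/ε^2) ≤ 1/(x^2 - 1.66*x + 2) :=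
    le_trans (Real.exp_le_exp.2 hexparg) hexpb
  have hεle : ε = 1/(1+x) := by rw [← hεx]; field_simp
  have step1 : ε * (1-ε) * (-Real.log ε) ≤ ε^2 * x^2 := by
    calc ε * (1-ε) * (-Real.log ε) ≤ ε * (1-ε) * x := by
          apply mul_le_mul_of_nonneg_left hlog (by nlinarith)
      _ = ε^2 * x^2 := by rw [hεeq]; ring
  have hε2 : ε^2 * x^2 = x^2/(1+x)^2 := by
    rw [hεle]; field_simp
  have hfin : x^2/(1+x)^2 * (1/(x^2 - 1.66*x + 2)) ≤ 3/10 := by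
    rw [div_mul_div_comm, mul_one, div_le_iff₀ (by positivity)]
    nlinarith [num_quartic x hx0.le]
  calc ε * (1-ε) * (-Real.log ε) * Real.exp (2 * Real.exp (3/5) * (1-ε)/ε - 1/ε^2)
      ≤ (ε^2 * x^2) * (1/(x^2 - 1.66*x + 2)) := by
        apply mul_le_mul step1 hexpmono (Real.exp_pos _).le (by positivity)
    _ = x^2/(1+x)^2 * (1/(x^2 - 1.66*x + 2)) := by rw [hε2]
    _ ≤ 3/10 := hfin

lemma exp_sub_one_le (x : ℝ) (h0 : 0 ≤ x) (h1 : x ≤ 3/5) :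
    Real.exp x - 1 ≤ x * Real.exp (3/5) := by
  have h2 : 1 - x ≤ Real.exp (-x) := by have := Real.add_one_le_exp (-x); linarith
  have h3 : Real.exp x * (1 - x) ≤ 1 := by
    calc Real.exp x * (1 - x) ≤ Real.exp x * Real.exp (-x) :=
          mul_le_mul_of_nonneg_left h2 (Real.exp_pos _).le
      _ = 1 := by rw [← Real.exp_add]; simp
  have h4 : Real.exp x ≤ Real.exp (3/5) := Real.exp_le_exp.2 h1
  nlinarith [Real.exp_pos x]

set_option maxHeartbeats 2000000 in
/-- Lipschitz parameterization of `Exp4`. If `Σ_j ξ_{j,t}(i) ≥ ρ`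
for all `t ≥ 1` and `i`, `F ≥ |E|`, `ε ∈ (0, ρ/F)`,
`T_ε = min(⌊(1/F − ε/ρ)√n/R⌋, n)` and `L_ε = (1/(Rε²)) e^{1/ε²}`, then for all
parameters `θ, δ ∈ [r, R] ⊆ [0, R]` and all `1 ≤ t ≤ T_ε`,
`sup_k |log(π_t^θ(k)/π_t^δ(k))| ≤ L_ε |θ − δ|`. -/
theorem exp4_lipschitz (n K : ℕ) (hn : 1 ≤ n) (hK : 2 ≤ K)
    {E : Type*} [Fintype E] [Nonempty E]
    (ξ : E → ℕ → Fin K → ℝ)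
    (hξ0 : ∀ j t a, 0 ≤ ξ j t a) (hξ1 : ∀ j t, ∑ a, ξ j t a = 1)
    (g : Fin K → ℕ → ℝ) (hg : ∀ a t, g a t ∈ Set.Icc (0 : ℝ) 1)
    (A : ℕ → Fin K)
    (ρ : ℝ) (hρ : 0 < ρ) (hρξ : ∀ t, 1 ≤ t → ∀ i : Fin K, ρ ≤ ∑ j, ξ j t i)
    (F : ℕ) (hF : Fintype.card E ≤ F)
    (ε R : ℝ) (hε : 0 < ε) (hεF : ε < ρ / F) (hR : 0 < R)
    (Tε : ℕ) (hTε : Tε = min ⌊(1 / F - ε / ρ) * Real.sqrt n / R⌋₊ n)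
    (Lε : ℝ) (hLε : Lε = 1 / (R * ε ^ 2) * Real.exp (1 / ε ^ 2)) :
    ∀ θ δ : ℝ, θ ∈ Set.Icc 0 R → δ ∈ Set.Icc 0 R →
      ∀ t, 1 ≤ t → t ≤ Tε → ∀ k,
        |Real.log (exp4Pi n K ξ g A θ t k / exp4Pi n K ξ g A δ t k)| ≤
          Lε * |θ - δ| := by
  -- basic facts
  have hg0 : ∀ a t, 0 ≤ g a t := fun a t => (hg a t).1
  have hg1 : ∀ a t, g a t ≤ 1 := fun a t => (hg a t).2
  have hsq0 : (0:ℝ) < Real.sqrt n := by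
    apply Real.sqrt_pos.2; exact_mod_cast Nat.lt_of_lt_of_le Nat.zero_lt_one hn
  have hcard1 : 1 ≤ Fintype.card E := Fintype.card_pos
  have hF1 : (1:ℝ) ≤ (F:ℝ) := by exact_mod_cast le_trans hcard1 hF
  have hF0 : (0:ℝ) < (F:ℝ) := lt_of_lt_of_le one_pos hF1
  have hξle1 : ∀ j t a, ξ j t a ≤ 1 := by
    intro j t a
    calc ξ j t a ≤ ∑ b, ξ j t b :=
          Finset.single_le_sum (fun i _ => hξ0 j t i) (Finset.mem_univ a)
      _ = 1 := hξ1 j t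
  have hρF : ρ ≤ (F:ℝ) := by
    have h1 := hρξ 1 le_rfl ⟨0, by omega⟩
    have h2 : ∑ j, ξ j 1 ⟨0, by omega⟩ ≤ (Fintype.card E : ℝ) := by
      calc ∑ j, ξ j 1 ⟨0, by omega⟩ ≤ ∑ _j : E, (1:ℝ) :=
            Finset.sum_le_sum fun j _ => hξle1 j 1 _
        _ = (Fintype.card E : ℝ) := by simp
    have h3 : (Fintype.card E : ℝ) ≤ (F:ℝ) := by exact_mod_cast hF
    linarith
  have hεFρ : ε * F < ρ := (lt_div_iff₀ hF0).1 hεF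
  have hε1 : ε < 1 := by
    have : ρ / F ≤ 1 := (div_le_one hF0).2 hρF
    linarith
  have hεq : ε / ρ < 1 / F := by
    rw [div_lt_div_iff₀ hρ hF0]; linarith
  have hT_floor : (Tε:ℝ) ≤ (1/F - ε/ρ) * Real.sqrt n / R := by
    have h1 : Tε ≤ ⌊(1 / F - ε / ρ) * Real.sqrt n / R⌋₊ := hTε ▸ min_le_left _ _
    have h2 : (0:ℝ) ≤ (1/F - ε/ρ) * Real.sqrt n / R := by
      apply div_nonneg (mul_nonneg (by linarith) hsq0.le) hR.le
    calc (Tε:ℝ) ≤ (⌊(1 / F - ε / ρ) * Real.sqrt n / R⌋₊ : ℝ) := by exact_mod_cast h1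
      _ ≤ (1/F - ε/ρ) * Real.sqrt n / R := Nat.floor_le h2
  have hβT : R / Real.sqrt n * (Tε:ℝ) ≤ 1/F - ε/ρ := by
    rw [div_mul_eq_mul_div, div_le_iff₀ hsq0]
    have h1 := mul_le_mul_of_nonneg_left hT_floor hR.le
    calc R * (Tε:ℝ) ≤ R * ((1/F - ε/ρ) * Real.sqrt n / R) := h1
      _ = (1/F - ε/ρ) * Real.sqrt n := by field_simp
  have hβTF : R / Real.sqrt n * (Tε:ℝ) * F ≤ 1 - ε*F/ρ := by
    have h1 : (1/F - ε/ρ) * F = 1 - ε*F/ρ := by field_simp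
    calc R / Real.sqrt n * (Tε:ℝ) * F ≤ (1/F - ε/ρ) * F :=
          mul_le_mul_of_nonneg_right hβT hF0.le
      _ = 1 - ε*F/ρ := h1
  have hβTρ : R / Real.sqrt n * (Tε:ℝ) * ρ ≤ 1 - ε := by
    have h1 : (1/F - ε/ρ) * ρ = ρ/F - ε := by field_simp
    have h2 : ρ / F ≤ 1 := (div_le_one hF0).2 hρF
    calc R / Real.sqrt n * (Tε:ℝ) * ρ ≤ (1/F - ε/ρ) * ρ :=
          mul_le_mul_of_nonneg_right hβT hρ.le
      _ = ρ/F - ε := h1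
      _ ≤ 1 - ε := by linarith
  have hβT1ε : R / Real.sqrt n * (Tε:ℝ) ≤ 1 - ε := by
    have h1 : ε / F ≤ ε / ρ := div_le_div_of_nonneg_left hε.le hρ hρF
    have h2 : 1/F - ε/ρ ≤ (1-ε)/F := by
      rw [sub_div]
      have : ε/F ≤ ε/ρ := h1
      linarith
    have h3 : (1-ε)/F ≤ 1-ε := by
      apply div_le_self (by linarith) hF1
    linarith
  -- structural facts
  have hπeq : ∀ (θ':ℝ) (s:ℕ) (b : Fin K),
      (∑ i, softmax (fun i' => -(θ' / Real.sqrt n) * exp4Y n K ξ g A θ' s i') i * ξ i (s+1) b)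
        = exp4Pi n K ξ g A θ' (s+1) b := by
    intro θ' s b
    simp [exp4Pi, exp4q]
  have hYrec : ∀ (θ':ℝ) (s:ℕ) (j:E), exp4Y n K ξ g A θ' (s+1) j =
      exp4Y n K ξ g A θ' s j +
        ξ j (s+1) (A (s+1)) * g (A (s+1)) (s+1) / exp4Pi n K ξ g A θ' (s+1) (A (s+1)) := by
    intro θ' s j
    rw [← hπeq]
    rfl
  have hqdef : ∀ (θ':ℝ) (s:ℕ), exp4q n K ξ g A θ' (s+1) =
      softmax (fun i => -(θ' / Real.sqrt n) * exp4Y n K ξ g A θ' s i) := by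
    intro θ' s; simp [exp4q]
  have hqpos : ∀ (θ':ℝ) (t:ℕ) (j:E), 0 < exp4q n K ξ g A θ' t j :=
    fun θ' t j => softmax_pos _ _
  have hqsum : ∀ (θ':ℝ) (t:ℕ), ∑ j, exp4q n K ξ g A θ' t j = 1 :=
    fun θ' t => softmax_sum_one _
  have hπpos : ∀ (θ':ℝ) (t:ℕ), 1 ≤ t → ∀ b, 0 < exp4Pi n K ξ g A θ' t b := by
    intro θ' t ht b
    obtain ⟨j0, hj0⟩ : ∃ j0, 0 < ξ j0 t b := by
      by_contra hcon; push_neg at hcon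
      have : ∑ j, ξ j t b ≤ 0 := Finset.sum_nonpos fun j _ => hcon j
      linarith [hρξ t ht b]
    exact Finset.sum_pos' (fun j _ => mul_nonneg (hqpos θ' t j).le (hξ0 j t b))
      ⟨j0, Finset.mem_univ _, mul_pos (hqpos θ' t j0) hj0⟩
  have hπle1 : ∀ (θ':ℝ) (t:ℕ) (b : Fin K), exp4Pi n K ξ g A θ' t b ≤ 1 := by
    intro θ' t b
    calc exp4Pi n K ξ g A θ' t b ≤ ∑ j, exp4q n K ξ g A θ' t j :=
          Finset.sum_le_sum fun j _ =>
            mul_le_of_le_one_right (hqpos θ' t j).le (hξle1 j t b)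
      _ = 1 := hqsum θ' t
  have hπ_ge_term : ∀ (θ':ℝ) (t:ℕ) (b : Fin K) (j:E),
      exp4q n K ξ g A θ' t j * ξ j t b ≤ exp4Pi n K ξ g A θ' t b := by
    intro θ' t b j
    exact Finset.single_le_sum (fun i _ => mul_nonneg (hqpos θ' t i).le (hξ0 i t b))
      (Finset.mem_univ j)
  have hYnn : ∀ (θ':ℝ) (s:ℕ) (j:E), 0 ≤ exp4Y n K ξ g A θ' s j := by
    intro θ' s
    induction s with
    | zero => intro j; simp [exp4Y]
    | succ s ih =>
      intro j
      rw [hYrec]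
      have h1 : 0 ≤ ξ j (s+1) (A (s+1)) * g (A (s+1)) (s+1) / exp4Pi n K ξ g A θ' (s+1) (A (s+1)) :=
        div_nonneg (mul_nonneg (hξ0 _ _ _) (hg0 _ _)) (hπpos θ' (s+1) (by omega) _).le
      linarith [ih j]
  have hinc_le_q : ∀ (θ':ℝ) (s:ℕ) (j:E),
      ξ j (s+1) (A (s+1)) * g (A (s+1)) (s+1) / exp4Pi n K ξ g A θ' (s+1) (A (s+1))
        ≤ 1 / exp4q n K ξ g A θ' (s+1) j := by
    intro θ' s j
    rw [div_le_div_iff₀ (hπpos θ' (s+1) (by omega) _) (hqpos θ' (s+1) j)]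
    have h1 := hπ_ge_term θ' (s+1) (A (s+1)) j
    have h2 := hqpos θ' (s+1) j
    have h3 := hξ0 j (s+1) (A (s+1))
    have h4 := hg0 (A (s+1)) (s+1)
    have h5 := hg1 (A (s+1)) (s+1)
    nlinarith [mul_nonneg (mul_nonneg h3 (sub_nonneg.2 h5)) h2.le]
  -- lower bound on exp(-η Y)
  have hexp_lb : ∀ (θ':ℝ), 0 ≤ θ' → ∀ (s:ℕ) (j:E),
      1 - (s:ℝ) * (θ'/Real.sqrt n) * F ≤
        Real.exp (-(θ'/Real.sqrt n) * exp4Y n K ξ g A θ' s j) := by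
    intro θ' hθ'
    have hη0 : 0 ≤ θ'/Real.sqrt n := div_nonneg hθ' hsq0.le
    intro s
    induction s with
    | zero => intro j; simp [exp4Y]
    | succ s ih =>
      intro j
      set η := θ'/Real.sqrt n with hηdef
      set inc := ξ j (s+1) (A (s+1)) * g (A (s+1)) (s+1) / exp4Pi n K ξ g A θ' (s+1) (A (s+1)) with hincdef
      have hinc0 : 0 ≤ inc :=
        div_nonneg (mul_nonneg (hξ0 _ _ _) (hg0 _ _)) (hπpos θ' (s+1) (by omega) _).le
      have hS : (∑ l, Real.exp (-(η) * exp4Y n K ξ g A θ' s l)) ≤ F := by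
        calc (∑ l, Real.exp (-(η) * exp4Y n K ξ g A θ' s l)) ≤ ∑ _l : E, (1:ℝ) := by
              refine Finset.sum_le_sum fun l _ => Real.exp_le_one_iff.2 ?_
              have := hYnn θ' s l
              nlinarith
          _ = (Fintype.card E : ℝ) := by simp
          _ ≤ F := by exact_mod_cast hF
      have hq_eq : exp4q n K ξ g A θ' (s+1) j =
          Real.exp (-(η) * exp4Y n K ξ g A θ' s j) /
            (∑ l, Real.exp (-(η) * exp4Y n K ξ g A θ' s l)) := by
        rw [hqdef]; rfl
      have hSpos : (0:ℝ) < ∑ l, Real.exp (-(η) * exp4Y n K ξ g A θ' s l) :=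
        Finset.sum_pos (fun l _ => Real.exp_pos _) Finset.univ_nonempty
      have e3 : inc * Real.exp (-(η) * exp4Y n K ξ g A θ' s j) ≤ F := by
        have h6 : inc ≤ 1 / exp4q n K ξ g A θ' (s+1) j := hinc_le_q θ' s j
        rw [hq_eq, one_div_div] at h6
        have h7 : inc * Real.exp (-(η) * exp4Y n K ξ g A θ' s j) ≤
            ∑ l, Real.exp (-(η) * exp4Y n K ξ g A θ' s l) := by
          rw [← le_div_iff₀ (Real.exp_pos _)]
          exact h6
        linarith
      have e1 : Real.exp (-(η) * exp4Y n K ξ g A θ' (s+1) j) =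
          Real.exp (-(η) * exp4Y n K ξ g A θ' s j) * Real.exp (-(η) * inc) := by
        rw [hYrec θ' s j, ← Real.exp_add, ← hincdef]
        ring_nf
      have e2 : 1 - η * inc ≤ Real.exp (-(η) * inc) := by
        have := Real.add_one_le_exp (-(η * inc))
        have h8 : -(η) * inc = -(η * inc) := by ring
        rw [h8]; linarith
      have ihj := ih j
      have hexpY := Real.exp_pos (-(η) * exp4Y n K ξ g A θ' s j)
      have hηF : 0 ≤ η * inc := mul_nonneg hη0 hinc0
      calc 1 - ((s+1:ℕ):ℝ) * η * F = (1 - (s:ℝ) * η * F) - η * F := by push_cast; ring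
        _ ≤ Real.exp (-(η) * exp4Y n K ξ g A θ' s j) - η * (inc * Real.exp (-(η) * exp4Y n K ξ g A θ' s j)) := by
            have h9 : η * (inc * Real.exp (-(η) * exp4Y n K ξ g A θ' s j)) ≤ η * F :=
              mul_le_mul_of_nonneg_left e3 hη0
            linarith
        _ = Real.exp (-(η) * exp4Y n K ξ g A θ' s j) * (1 - η * inc) := by ring
        _ ≤ Real.exp (-(η) * exp4Y n K ξ g A θ' s j) * Real.exp (-(η) * inc) :=
            mul_le_mul_of_nonneg_left e2 hexpY.le
        _ = Real.exp (-(η) * exp4Y n K ξ g A θ' (s+1) j) := e1.symm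
  -- lower bound on q
  have hq_lb : ∀ (θ':ℝ), 0 ≤ θ' → θ' ≤ R → ∀ (t:ℕ), 1 ≤ t → t ≤ Tε → ∀ (j:E),
      ε/ρ ≤ exp4q n K ξ g A θ' t j := by
    intro θ' h0' hR' t ht1 htT j
    have hη0 : 0 ≤ θ'/Real.sqrt n := div_nonneg h0' hsq0.le
    have hηβ : θ'/Real.sqrt n ≤ R/Real.sqrt n := by
      gcongr
    have hexp := hexp_lb θ' h0' (t-1) j
    have hcast : ((t-1:ℕ):ℝ) ≤ (Tε:ℝ) := by
      have : t - 1 ≤ Tε := le_trans (Nat.sub_le t 1) htT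
      exact_mod_cast this
    have hkey : ε*F/ρ ≤ 1 - ((t-1:ℕ):ℝ) * (θ'/Real.sqrt n) * F := by
      have h1 : ((t-1:ℕ):ℝ) * (θ'/Real.sqrt n) * F ≤ (Tε:ℝ) * (R/Real.sqrt n) * F := by
        apply mul_le_mul_of_nonneg_right _ hF0.le
        apply mul_le_mul hcast hηβ hη0 (Nat.cast_nonneg _)
      have h2 : (Tε:ℝ) * (R/Real.sqrt n) * F = R / Real.sqrt n * (Tε:ℝ) * F := by ring
      rw [h2] at h1
      linarith [hβTF]
    have hnum : ε*F/ρ ≤ Real.exp (-(θ'/Real.sqrt n) * exp4Y n K ξ g A θ' (t-1) j) := by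
      linarith
    have hS : (∑ l, Real.exp (-(θ'/Real.sqrt n) * exp4Y n K ξ g A θ' (t-1) l)) ≤ F := by
      calc (∑ l, Real.exp (-(θ'/Real.sqrt n) * exp4Y n K ξ g A θ' (t-1) l)) ≤ ∑ _l : E, (1:ℝ) := by
            refine Finset.sum_le_sum fun l _ => Real.exp_le_one_iff.2 ?_
            have := hYnn θ' (t-1) l
            nlinarith
        _ = (Fintype.card E : ℝ) := by simp
        _ ≤ F := by exact_mod_cast hF
    have hSpos : (0:ℝ) < ∑ l, Real.exp (-(θ'/Real.sqrt n) * exp4Y n K ξ g A θ' (t-1) l) :=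
      Finset.sum_pos (fun l _ => Real.exp_pos _) Finset.univ_nonempty
    have hq_eq : exp4q n K ξ g A θ' t j =
        Real.exp (-(θ'/Real.sqrt n) * exp4Y n K ξ g A θ' (t-1) j) /
          (∑ l, Real.exp (-(θ'/Real.sqrt n) * exp4Y n K ξ g A θ' (t-1) l)) := rfl
    rw [hq_eq]
    have hεform : ε/ρ = (ε*F/ρ)/F := by field_simp
    rw [hεform]
    exact div_le_div₀ (Real.exp_pos _).le hnum hSpos hS
  -- lower bound on π
  have hπ_lb : ∀ (θ':ℝ), 0 ≤ θ' → θ' ≤ R → ∀ (t:ℕ), 1 ≤ t → t ≤ Tε → ∀ (b : Fin K),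
      ε ≤ exp4Pi n K ξ g A θ' t b := by
    intro θ' h0' hR' t ht1 htT b
    calc ε = ε/ρ * ρ := by field_simp
      _ ≤ ε/ρ * ∑ j, ξ j t b := by
          apply mul_le_mul_of_nonneg_left (hρξ t ht1 b) (by positivity)
      _ = ∑ j, ε/ρ * ξ j t b := Finset.mul_sum _ _ _
      _ ≤ ∑ j, exp4q n K ξ g A θ' t j * ξ j t b :=
          Finset.sum_le_sum fun j _ =>
            mul_le_mul_of_nonneg_right (hq_lb θ' h0' hR' t ht1 htT j) (hξ0 j t b)
      _ = exp4Pi n K ξ g A θ' t b := rfl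
  -- upper bound on Y
  have hY_ub : ∀ (θ':ℝ), 0 ≤ θ' → θ' ≤ R → ∀ (s:ℕ), s ≤ Tε → ∀ (j:E),
      exp4Y n K ξ g A θ' s j ≤ (s:ℝ) * (ρ/ε) := by
    intro θ' h0' hR' s
    induction s with
    | zero => intro _ j; simp [exp4Y]
    | succ s ih =>
      intro hs j
      have hs' : s ≤ Tε := Nat.le_of_succ_le hs
      have h1 := hinc_le_q θ' s j
      have h2 : 1 / exp4q n K ξ g A θ' (s+1) j ≤ ρ/ε := by
        rw [div_le_div_iff₀ (hqpos θ' (s+1) j) hε]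
        have h3 := hq_lb θ' h0' hR' (s+1) (by omega) hs j
        rw [div_le_iff₀ hρ] at h3
        linarith
      rw [hYrec]
      have := ih hs' j
      push_cast
      linarith
  -- main part
  intro θ δ hθ hδ t ht1 htT k
  obtain ⟨hθ0, hθR⟩ := hθ
  obtain ⟨hδ0, hδR⟩ := hδ
  have hπθpos := hπpos θ t ht1 k
  have hπδpos := hπpos δ t ht1 k
  have hπθlb := hπ_lb θ hθ0 hθR t ht1 htT k
  have hπδlb := hπ_lb δ hδ0 hδR t ht1 htT k
  have hπθub := hπle1 θ t k
  have hπδub := hπle1 δ t k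
  have hLε0 : 0 ≤ Lε := by rw [hLε]; positivity
  set Δ := |θ - δ| with hΔdef
  have hΔ0 : 0 ≤ Δ := abs_nonneg _
  have hlg0 : 0 < -Real.log ε := by
    have := Real.log_neg hε hε1; linarith
  set Δ₀ := R * ε^2 * (-Real.log ε) * Real.exp (-(1/ε^2)) with hΔ₀def
  have hLεΔ₀ : Lε * Δ₀ = -Real.log ε := by
    rw [hLε, hΔ₀def, Real.exp_neg]
    field_simp
  have hΔ₀pos : 0 < Δ₀ := by
    rw [hΔ₀def]
    exact mul_pos (mul_pos (mul_pos hR (by positivity)) hlg0) (Real.exp_pos _)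
  have h1ε0 : (0:ℝ) ≤ 1 - ε := by linarith
  rcases le_or_gt Δ₀ Δ with hcase | hcase
  · -- trivial case
    have h1 : Real.log (exp4Pi n K ξ g A θ t k) ≤ 0 := Real.log_nonpos hπθpos.le hπθub
    have h2 : Real.log (exp4Pi n K ξ g A δ t k) ≤ 0 := Real.log_nonpos hπδpos.le hπδub
    have h3 : Real.log ε ≤ Real.log (exp4Pi n K ξ g A θ t k) := Real.log_le_log hε hπθlb
    have h4 : Real.log ε ≤ Real.log (exp4Pi n K ξ g A δ t k) := Real.log_le_log hε hπδlb
    have h5 : -Real.log ε ≤ Lε * Δ := by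
      rw [← hLεΔ₀]
      exact mul_le_mul_of_nonneg_left hcase hLε0
    rw [Real.log_div (ne_of_gt hπθpos) (ne_of_gt hπδpos)]
    rw [abs_le]
    constructor <;> [skip; skip] <;> linarith
  · -- fine (Lipschitz) case
    set β := R / Real.sqrt n with hβdef
    have hβ0 : 0 < β := div_pos hR hsq0
    set a := 2 * Real.exp (3/5) * β / ε with hadef
    have ha0 : 0 < a := by
      apply div_pos _ hε
      positivity
    set α := 2 * Real.exp (3/5) * (1-ε) / ε with hαdef
    have hα0 : 0 ≤ α := by
      apply div_nonneg _ hε.le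
      exact mul_nonneg (by positivity) (by linarith)
    set cB := Δ * (1-ε) * Real.exp α / (R * ε) with hcBdef
    have hcB0 : 0 ≤ cB := by
      apply div_nonneg _ (by positivity)
      exact mul_nonneg (mul_nonneg hΔ0 (by linarith)) (Real.exp_pos α).le
    have hcB3 : cB ≤ 3/10 := by
      have h1 : cB ≤ Δ₀ * (1-ε) * Real.exp α / (R * ε) := by
        rw [hcBdef]
        apply div_le_div₀ (mul_nonneg (mul_nonneg hΔ₀pos.le h1ε0) (Real.exp_pos α).le) _
          (by positivity) le_rfl
        exact mul_le_mul_of_nonneg_right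
          (mul_le_mul_of_nonneg_right hcase.le (by linarith)) (Real.exp_pos α).le
      have h2 : Δ₀ * (1-ε) * Real.exp α / (R * ε) =
          ε * (1-ε) * (-Real.log ε) * Real.exp (α - 1/ε^2) := by
        rw [hΔ₀def, show α - 1/ε^2 = α + -(1/ε^2) by ring, Real.exp_add]
        field_simp
      have h3 := num_ineq ε hε hε1
      rw [← hαdef] at h3
      linarith [h2 ▸ h1]
    have haT : a * (Tε:ℝ) ≤ α := by
      have h1 := mul_le_mul_of_nonneg_left hβT1ε
        (show (0:ℝ) ≤ 2*Real.exp (3/5)/ε by positivity)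
      calc a * (Tε:ℝ) = 2*Real.exp (3/5)/ε * (β * Tε) := by rw [hadef]; ring
        _ ≤ 2*Real.exp (3/5)/ε * (1-ε) := by rw [hβdef]; exact h1
        _ = α := by rw [hαdef]; ring
    have hpow1 : ∀ s : ℕ, (1:ℝ) ≤ (1+a)^s := by
      intro s
      calc (1:ℝ) = 1^s := (one_pow s).symm
        _ ≤ (1+a)^s := pow_le_pow_left₀ (by norm_num) (by linarith) s
    have hpow : ∀ s : ℕ, s ≤ Tε → ((1+a)^s : ℝ) ≤ Real.exp α := by
      intro s hs
      calc ((1+a)^s : ℝ) ≤ (Real.exp a)^s :=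
            pow_le_pow_left₀ (by linarith) (by linarith [Real.add_one_le_exp a]) s
        _ = Real.exp ((s:ℝ) * a) := by rw [← Real.exp_nat_mul]
        _ ≤ Real.exp α := by
            apply Real.exp_le_exp.2
            have h1 : (s:ℝ) * a ≤ (Tε:ℝ) * a :=
              mul_le_mul_of_nonneg_right (by exact_mod_cast hs) ha0.le
            linarith [haT, mul_comm (Tε:ℝ) a]
    set D := Δ * ρ / (R*ε) with hDdef
    have hD0 : 0 ≤ D := by positivity
    set ct : ℕ → ℝ := fun s => Δ * β * s * ρ / (R*ε) + β * (D * s * ((1+a)^s - 1)) with hctdef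
    have hct_app : ∀ s : ℕ, ct s = Δ * β * s * ρ / (R*ε) + β * (D * s * ((1+a)^s - 1)) :=
      fun s => rfl
    have hct0 : ∀ s : ℕ, 0 ≤ ct s := by
      intro s
      rw [hct_app]
      have h1 : (0:ℝ) ≤ (1+a)^s - 1 := by linarith [hpow1 s]
      have h2 : (0:ℝ) ≤ β * (D * s * ((1+a)^s - 1)) :=
        mul_nonneg hβ0.le (mul_nonneg (mul_nonneg hD0 (Nat.cast_nonneg s)) h1)
      have h3 : (0:ℝ) ≤ Δ * β * s * ρ / (R*ε) := by positivity
      linarith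
    have hct_le_cB : ∀ s : ℕ, s ≤ Tε → ct s ≤ cB := by
      intro s hs
      have hsc : (s:ℝ) ≤ (Tε:ℝ) := by exact_mod_cast hs
      have hβsρ : β * s * ρ ≤ 1 - ε := by
        have h1 : β * (s:ℝ) ≤ β * (Tε:ℝ) := mul_le_mul_of_nonneg_left hsc hβ0.le
        have h2 := mul_le_mul_of_nonneg_right h1 hρ.le
        linarith [hβTρ]
      have t1 : Δ * β * s * ρ / (R*ε) ≤ Δ * (1-ε) / (R*ε) := by
        apply div_le_div₀ (mul_nonneg hΔ0 h1ε0) _ (by positivity) le_rfl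
        have := mul_le_mul_of_nonneg_left hβsρ hΔ0
        linarith
      have t2 : β * (D * s * ((1+a)^s - 1)) ≤ Δ * (1-ε) / (R*ε) * (Real.exp α - 1) := by
        have h1 : ((1+a)^s : ℝ) - 1 ≤ Real.exp α - 1 := by linarith [hpow s hs]
        have h2 : (0:ℝ) ≤ (1+a)^s - 1 := by linarith [hpow1 s]
        calc β * (D * s * ((1+a)^s - 1)) = (Δ * (β * s * ρ) / (R*ε)) * ((1+a)^s - 1) := by
              rw [hDdef]; ring
          _ ≤ (Δ * (1-ε) / (R*ε)) * (Real.exp α - 1) := by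
              apply mul_le_mul _ h1 h2 (div_nonneg (mul_nonneg hΔ0 h1ε0) (by positivity))
              apply div_le_div₀ (mul_nonneg hΔ0 h1ε0) _ (by positivity) le_rfl
              exact mul_le_mul_of_nonneg_left hβsρ hΔ0
      calc ct s = Δ * β * s * ρ / (R*ε) + β * (D * s * ((1+a)^s - 1)) := hct_app s
        _ ≤ Δ * (1-ε)/(R*ε) + Δ * (1-ε)/(R*ε) * (Real.exp α - 1) := by linarith
        _ = cB := by rw [hcBdef]; ring
    have Hud : ∀ s : ℕ, s ≤ Tε →
        (∀ j, |exp4Y n K ξ g A θ s j - exp4Y n K ξ g A δ s j| ≤ D * s * ((1+a)^s - 1)) →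
        ∀ j, |(-(θ/Real.sqrt n) * exp4Y n K ξ g A θ s j) -
              (-(δ/Real.sqrt n) * exp4Y n K ξ g A δ s j)| ≤ ct s := by
      intro s hs hYd j
      have hYθub := hY_ub θ hθ0 hθR s hs j
      have hYθnn := hYnn θ s j
      have hYdj := hYd j
      have heq : (-(θ/Real.sqrt n) * exp4Y n K ξ g A θ s j) -
            (-(δ/Real.sqrt n) * exp4Y n K ξ g A δ s j)
          = -((θ-δ)/Real.sqrt n * exp4Y n K ξ g A θ s j +
              δ/Real.sqrt n * (exp4Y n K ξ g A θ s j - exp4Y n K ξ g A δ s j)) := by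
        ring
      rw [heq, abs_neg]
      have h2 : |(θ-δ)/Real.sqrt n * exp4Y n K ξ g A θ s j| ≤ Δ * β * s * ρ / (R*ε) := by
        rw [abs_mul, abs_div, abs_of_nonneg (Real.sqrt_nonneg _), abs_of_nonneg hYθnn,
          ← hΔdef]
        have h3 : Δ / Real.sqrt n * exp4Y n K ξ g A θ s j ≤ Δ / Real.sqrt n * ((s:ℝ)*(ρ/ε)) :=
          mul_le_mul_of_nonneg_left hYθub (by positivity)
        have h4 : Δ / Real.sqrt n * ((s:ℝ)*(ρ/ε)) = Δ * β * s * ρ / (R*ε) := by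
          rw [hβdef]; field_simp
        linarith
      have h5 : |δ/Real.sqrt n * (exp4Y n K ξ g A θ s j - exp4Y n K ξ g A δ s j)|
          ≤ β * (D * s * ((1+a)^s - 1)) := by
        rw [abs_mul, abs_of_nonneg (div_nonneg hδ0 hsq0.le)]
        apply mul_le_mul _ hYdj (abs_nonneg _) hβ0.le
        rw [hβdef]
        gcongr
      calc |(θ-δ)/Real.sqrt n * exp4Y n K ξ g A θ s j +
              δ/Real.sqrt n * (exp4Y n K ξ g A θ s j - exp4Y n K ξ g A δ s j)|
          ≤ |(θ-δ)/Real.sqrt n * exp4Y n K ξ g A θ s j| +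
              |δ/Real.sqrt n * (exp4Y n K ξ g A θ s j - exp4Y n K ξ g A δ s j)| := abs_add_le _ _
        _ ≤ Δ * β * s * ρ / (R*ε) + β * (D * s * ((1+a)^s - 1)) := by linarith
        _ = ct s := (hct_app s).symm
    have Hπc : ∀ (s : ℕ) (c : ℝ),
        (∀ j, |(-(θ/Real.sqrt n) * exp4Y n K ξ g A θ s j) -
              (-(δ/Real.sqrt n) * exp4Y n K ξ g A δ s j)| ≤ c) →
        ∀ b : Fin K,
          exp4Pi n K ξ g A θ (s+1) b ≤ Real.exp (2*c) * exp4Pi n K ξ g A δ (s+1) b ∧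
          exp4Pi n K ξ g A δ (s+1) b ≤ Real.exp (2*c) * exp4Pi n K ξ g A θ (s+1) b := by
      intro s c hc b
      have hc' : ∀ j, |(-(δ/Real.sqrt n) * exp4Y n K ξ g A δ s j) -
            (-(θ/Real.sqrt n) * exp4Y n K ξ g A θ s j)| ≤ c := by
        intro j; rw [abs_sub_comm]; exact hc j
      constructor
      · calc exp4Pi n K ξ g A θ (s+1) b
            = ∑ j, exp4q n K ξ g A θ (s+1) j * ξ j (s+1) b := rfl
          _ ≤ ∑ j, (Real.exp (2*c) * exp4q n K ξ g A δ (s+1) j) * ξ j (s+1) b := by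
              refine Finset.sum_le_sum fun j _ => mul_le_mul_of_nonneg_right ?_ (hξ0 _ _ _)
              rw [hqdef θ s, hqdef δ s]
              exact softmax_comp _ _ c hc j
          _ = Real.exp (2*c) * exp4Pi n K ξ g A δ (s+1) b := by
              rw [show exp4Pi n K ξ g A δ (s+1) b = ∑ j, exp4q n K ξ g A δ (s+1) j * ξ j (s+1) b from rfl,
                Finset.mul_sum]
              exact Finset.sum_congr rfl fun j _ => by ring
      · calc exp4Pi n K ξ g A δ (s+1) b
            = ∑ j, exp4q n K ξ g A δ (s+1) j * ξ j (s+1) b := rfl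
          _ ≤ ∑ j, (Real.exp (2*c) * exp4q n K ξ g A θ (s+1) j) * ξ j (s+1) b := by
              refine Finset.sum_le_sum fun j _ => mul_le_mul_of_nonneg_right ?_ (hξ0 _ _ _)
              rw [hqdef θ s, hqdef δ s]
              exact softmax_comp _ _ c hc' j
          _ = Real.exp (2*c) * exp4Pi n K ξ g A θ (s+1) b := by
              rw [show exp4Pi n K ξ g A θ (s+1) b = ∑ j, exp4q n K ξ g A θ (s+1) j * ξ j (s+1) b from rfl,
                Finset.mul_sum]
              exact Finset.sum_congr rfl fun j _ => by ring
    have HY : ∀ s : ℕ, s ≤ Tε → ∀ j,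
        |exp4Y n K ξ g A θ s j - exp4Y n K ξ g A δ s j| ≤ D * s * ((1+a)^s - 1) := by
      intro s
      induction s with
      | zero => intro _ j; simp [exp4Y]
      | succ s ih =>
        intro hs j
        have hs' : s ≤ Tε := Nat.le_of_succ_le hs
        have ihj := ih hs' j
        have hud := Hud s hs' (ih hs')
        have hctcB : ct s ≤ cB := hct_le_cB s hs'
        have hct3 : ct s ≤ 3/10 := le_trans hctcB hcB3
        have hπc := Hπc s (ct s) hud (A (s+1))
        have hπθp := hπ_lb θ hθ0 hθR (s+1) (by omega) hs (A (s+1))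
        have hπδp := hπ_lb δ hδ0 hδR (s+1) (by omega) hs (A (s+1))
        have hπθpos' : 0 < exp4Pi n K ξ g A θ (s+1) (A (s+1)) := lt_of_lt_of_le hε hπθp
        have hπδpos' : 0 < exp4Pi n K ξ g A δ (s+1) (A (s+1)) := lt_of_lt_of_le hε hπδp
        have hexp1 : 1 ≤ Real.exp (2 * ct s) := by
          have h := Real.add_one_le_exp (2 * ct s)
          linarith only [h, hct0 s]
        have hinv : |1/exp4Pi n K ξ g A θ (s+1) (A (s+1)) -
            1/exp4Pi n K ξ g A δ (s+1) (A (s+1))| ≤ (Real.exp (2*ct s) - 1)/ε := by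
          rw [abs_le]
          constructor
          · have h1 : 1/exp4Pi n K ξ g A δ (s+1) (A (s+1)) ≤
                Real.exp (2*ct s)/exp4Pi n K ξ g A θ (s+1) (A (s+1)) := by
              rw [div_le_div_iff₀ hπδpos' hπθpos', one_mul]
              linarith [hπc.1]
            have h3 : Real.exp (2*ct s)/exp4Pi n K ξ g A θ (s+1) (A (s+1)) -
                1/exp4Pi n K ξ g A θ (s+1) (A (s+1))
                ≤ (Real.exp (2*ct s) - 1)/ε := by
              rw [div_sub_div_same]
              apply div_le_div₀ (by linarith only [hexp1]) le_rfl hε hπθp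
            linarith only [h1, h3]
          · have h1 : 1/exp4Pi n K ξ g A θ (s+1) (A (s+1)) ≤
                Real.exp (2*ct s)/exp4Pi n K ξ g A δ (s+1) (A (s+1)) := by
              rw [div_le_div_iff₀ hπθpos' hπδpos', one_mul]
              linarith [hπc.2]
            have h3 : Real.exp (2*ct s)/exp4Pi n K ξ g A δ (s+1) (A (s+1)) -
                1/exp4Pi n K ξ g A δ (s+1) (A (s+1))
                ≤ (Real.exp (2*ct s) - 1)/ε := by
              rw [div_sub_div_same]
              apply div_le_div₀ (by linarith only [hexp1]) le_rfl hε hπδp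
            linarith only [h1, h3]
        have hξg0 : 0 ≤ ξ j (s+1) (A (s+1)) * g (A (s+1)) (s+1) :=
          mul_nonneg (hξ0 _ _ _) (hg0 _ _)
        have hξg1 : ξ j (s+1) (A (s+1)) * g (A (s+1)) (s+1) ≤ 1 :=
          mul_le_one₀ (hξle1 _ _ _) (hg0 _ _) (hg1 _ _)
        have hstep : |exp4Y n K ξ g A θ (s+1) j - exp4Y n K ξ g A δ (s+1) j| ≤
            |exp4Y n K ξ g A θ s j - exp4Y n K ξ g A δ s j| + (Real.exp (2*ct s) - 1)/ε := by
          rw [hYrec θ s j, hYrec δ s j]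
          have heq2 : (exp4Y n K ξ g A θ s j +
                ξ j (s+1) (A (s+1)) * g (A (s+1)) (s+1) / exp4Pi n K ξ g A θ (s+1) (A (s+1))) -
              (exp4Y n K ξ g A δ s j +
                ξ j (s+1) (A (s+1)) * g (A (s+1)) (s+1) / exp4Pi n K ξ g A δ (s+1) (A (s+1)))
              = (exp4Y n K ξ g A θ s j - exp4Y n K ξ g A δ s j) +
                (ξ j (s+1) (A (s+1)) * g (A (s+1)) (s+1)) *
                  (1/exp4Pi n K ξ g A θ (s+1) (A (s+1)) -
                   1/exp4Pi n K ξ g A δ (s+1) (A (s+1))) := by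
            ring
          rw [heq2]
          have h6 : |(ξ j (s+1) (A (s+1)) * g (A (s+1)) (s+1)) *
              (1/exp4Pi n K ξ g A θ (s+1) (A (s+1)) -
               1/exp4Pi n K ξ g A δ (s+1) (A (s+1)))| ≤ (Real.exp (2*ct s) - 1)/ε := by
            rw [abs_mul, abs_of_nonneg hξg0]
            calc (ξ j (s+1) (A (s+1)) * g (A (s+1)) (s+1)) *
                |1/exp4Pi n K ξ g A θ (s+1) (A (s+1)) -
                 1/exp4Pi n K ξ g A δ (s+1) (A (s+1))|
                ≤ 1 * |1/exp4Pi n K ξ g A θ (s+1) (A (s+1)) -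
                      1/exp4Pi n K ξ g A δ (s+1) (A (s+1))| :=
                  mul_le_mul_of_nonneg_right hξg1 (abs_nonneg _)
              _ ≤ (Real.exp (2*ct s) - 1)/ε := by rw [one_mul]; exact hinv
          calc |(exp4Y n K ξ g A θ s j - exp4Y n K ξ g A δ s j) +
                (ξ j (s+1) (A (s+1)) * g (A (s+1)) (s+1)) *
                  (1/exp4Pi n K ξ g A θ (s+1) (A (s+1)) -
                   1/exp4Pi n K ξ g A δ (s+1) (A (s+1)))|
              ≤ |exp4Y n K ξ g A θ s j - exp4Y n K ξ g A δ s j| +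
                |(ξ j (s+1) (A (s+1)) * g (A (s+1)) (s+1)) *
                  (1/exp4Pi n K ξ g A θ (s+1) (A (s+1)) -
                   1/exp4Pi n K ξ g A δ (s+1) (A (s+1)))| := abs_add_le _ _
            _ ≤ |exp4Y n K ξ g A θ s j - exp4Y n K ξ g A δ s j| +
                (Real.exp (2*ct s) - 1)/ε := by linarith only [h6]
        have hlin : Real.exp (2*ct s) - 1 ≤ 2 * ct s * Real.exp (3/5) :=
          exp_sub_one_le (2*ct s) (by linarith only [hct0 s])
            (by linarith only [hct3])
        have hkey2 : (Real.exp (2*ct s) - 1)/ε ≤ a * (D * s) + a * (D * s * ((1+a)^s - 1)) := by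
          have h1 : (Real.exp (2*ct s) - 1)/ε ≤ 2 * ct s * Real.exp (3/5)/ε :=
            (div_le_div_iff_of_pos_right hε).2 hlin
          have h2 : 2 * ct s * Real.exp (3/5)/ε = a * (D * s) + a * (D * s * ((1+a)^s - 1)) := by
            rw [hct_app s, hadef, hDdef, hβdef]
            field_simp
          linarith only [h1, h2]
        have hP1 : (1:ℝ) ≤ (1+a)^s := hpow1 s
        have h1aP : (1:ℝ) ≤ (1+a)^s * (1+a) := by
          have h := mul_le_mul hP1 (show (1:ℝ) ≤ 1+a by linarith only [ha0]) (by norm_num)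
            (by positivity)
          linarith only [h]
        have hgoal : D * s * ((1+a)^s - 1) + (a * (D * s) + a * (D * s * ((1+a)^s - 1)))
            ≤ D * ((s:ℝ)+1) * ((1+a)^(s+1) - 1) := by
          rw [pow_succ]
          have hnn : 0 ≤ D * ((1+a)^s * (1+a) - 1) := mul_nonneg hD0 (by linarith)
          calc D * s * ((1+a)^s - 1) + (a * (D * s) + a * (D * s * ((1+a)^s - 1)))
              = D * (s:ℝ) * ((1+a)^s * (1+a) - 1) := by ring
            _ ≤ D * (s:ℝ) * ((1+a)^s * (1+a) - 1) + D * ((1+a)^s * (1+a) - 1) := by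
                linarith only [hnn]
            _ = D * ((s:ℝ)+1) * ((1+a)^s * (1+a) - 1) := by ring
        calc |exp4Y n K ξ g A θ (s+1) j - exp4Y n K ξ g A δ (s+1) j|
            ≤ |exp4Y n K ξ g A θ s j - exp4Y n K ξ g A δ s j| +
              (Real.exp (2*ct s) - 1)/ε := hstep
          _ ≤ D * s * ((1+a)^s - 1) + (a * (D * s) + a * (D * s * ((1+a)^s - 1))) := by
              linarith only [ihj, hkey2]
          _ ≤ D * ((s:ℝ)+1) * ((1+a)^(s+1) - 1) := hgoal
          _ = D * ((s+1:ℕ):ℝ) * ((1+a)^(s+1) - 1) := by push_cast; ring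
    -- conclude
    have ht' : t - 1 ≤ Tε := le_trans (Nat.sub_le t 1) htT
    have hts : t - 1 + 1 = t := Nat.succ_pred_eq_of_pos ht1
    have hud := Hud (t-1) ht' (HY (t-1) ht')
    have hπc := Hπc (t-1) (ct (t-1)) hud k
    rw [hts] at hπc
    have hctcB := hct_le_cB (t-1) ht'
    have hlog1 : Real.log (exp4Pi n K ξ g A θ t k) - Real.log (exp4Pi n K ξ g A δ t k)
        ≤ 2 * ct (t-1) := by
      have h1 := Real.log_le_log hπθpos hπc.1
      rwa [Real.log_mul (Real.exp_ne_zero _) (ne_of_gt hπδpos), Real.log_exp,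
        ← sub_le_iff_le_add] at h1
    have hlog2 : Real.log (exp4Pi n K ξ g A δ t k) - Real.log (exp4Pi n K ξ g A θ t k)
        ≤ 2 * ct (t-1) := by
      have h1 := Real.log_le_log hπδpos hπc.2
      rwa [Real.log_mul (Real.exp_ne_zero _) (ne_of_gt hπθpos), Real.log_exp,
        ← sub_le_iff_le_add] at h1
    have hfinal : 2 * cB ≤ Lε * Δ := by
      have hαε2 : α * ε^2 ≤ 1 := by
        have hh := mul_le_mul_of_nonneg_right exp_35_le (mul_nonneg h1ε0 hε.le)
        have h2 : α * ε^2 = 2*Real.exp (3/5)*((1-ε)*ε) := by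
          rw [hαdef]; field_simp
        linarith only [hh, sq_nonneg (2*ε-1), h2]
      have hαε : α ≤ 1/ε^2 := by
        rw [le_div_iff₀ (by positivity)]
        linarith only [hαε2]
      have hexpα : Real.exp α ≤ Real.exp (1/ε^2) := Real.exp_le_exp.2 hαε
      have h2ε : 2*ε*(1-ε) ≤ 1 := by linarith only [sq_nonneg (2*ε-1)]
      have key : 2*ε*(1-ε)*Real.exp α ≤ Real.exp (1/ε^2) := by
        calc 2*ε*(1-ε)*Real.exp α ≤ 1 * Real.exp (1/ε^2) :=
              mul_le_mul h2ε hexpα (Real.exp_pos _).le one_pos.le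
          _ = Real.exp (1/ε^2) := one_mul _
      rw [hcBdef, hLε]
      rw [show (2:ℝ) * (Δ * (1-ε) * Real.exp α / (R * ε)) =
        (2*Δ*(1-ε)*Real.exp α)/(R*ε) by ring]
      rw [show (1:ℝ)/(R*ε^2) * Real.exp (1/ε^2) * Δ = (Δ * Real.exp (1/ε^2))/(R*ε^2) by ring]
      rw [div_le_div_iff₀ (by positivity) (by positivity)]
      have e1 : (2*Δ*(1-ε)*Real.exp α) * (R*ε^2) = (R*ε*Δ) * (2*ε*(1-ε)*Real.exp α) := by ring
      have e2 : (Δ * Real.exp (1/ε^2)) * (R*ε) = (R*ε*Δ) * Real.exp (1/ε^2) := by ring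
      rw [e1, e2]
      exact mul_le_mul_of_nonneg_left key (by positivity)
    rw [Real.log_div (ne_of_gt hπθpos) (ne_of_gt hπδpos), abs_le]
    have h2c : 2 * ct (t-1) ≤ 2 * cB := by linarith only [hctcB]
    constructor
    · linarith only [hlog2, h2c, hfinal]
    · linarith only [hlog1, h2c, hfinal]
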